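/- Let n be a positive integer and K ∈ (0, 1/(n e^2)^{1/n}]. Given nonnegative real numbers b_1,...,b_n with Σ_{i=1}^n b_i = n K^n, there exist strictly positive real numbers t_1,...,t_n with Σ t_i = 1 such that K^{1/t_i} ≥ b_i for every i = 1,...,n. -/

import Mathlib

lemma plank_aux1 (x : ℝ) (hx : 0 ≤ x) : 1 + x + x^2/2 ≤ Real.exp x := by
  have := Real.sum_le_exp_of_nonneg hx 3
  simp [Finset.sum_range_succ] at this
  linarith

lemma plank_aux2 (s : ℝ) (hs : 0 ≤ s) : 2 - s ≤ (2 + s) * Real.exp (-s) := by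
  have hderiv : ∀ x : ℝ, HasDerivAt (fun t => (2 + t) * Real.exp (-t) - (2 - t))
      (1 - (1 + x) * Real.exp (-x)) x := by
    intro x
    have h1 : HasDerivAt (fun t : ℝ => 2 + t) 1 x := by
      simpa using (hasDerivAt_id x).const_add (2:ℝ)
    have h2 : HasDerivAt (fun t : ℝ => Real.exp (-t)) (-Real.exp (-x)) x := by
      exact ((Real.hasDerivAt_exp (-x)).comp x (hasDerivAt_neg x)).congr_deriv (by ring)
    have h4 : HasDerivAt (fun t : ℝ => 2 - t) (-1 : ℝ) x := by
      simpa using (hasDerivAt_id x).const_sub (2:ℝ)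
    have := (h1.mul h2).sub h4
    exact this.congr_deriv (by ring)
  have mono : MonotoneOn (fun t => (2 + t) * Real.exp (-t) - (2 - t)) (Set.Ici (0:ℝ)) := by
    apply monotoneOn_of_deriv_nonneg (convex_Ici 0)
    · exact Continuous.continuousOn (by continuity)
    · intro x hx
      exact ((hderiv x).differentiableAt).differentiableWithinAt
    · intro x hx
      rw [(hderiv x).deriv]
      have h5 : (x + 1) * Real.exp (-x) ≤ Real.exp x * Real.exp (-x) :=
        mul_le_mul_of_nonneg_right (Real.add_one_le_exp x) (Real.exp_pos _).le
      rw [← Real.exp_add] at h5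
      simp at h5
      nlinarith [h5]
  have h0 := mono (Set.self_mem_Ici) (Set.mem_Ici.mpr hs) hs
  simp at h0
  linarith

lemma plank_core (u v : ℝ) (hu : 2 ≤ u) (hv : 2 ≤ v) :
    v^2 ≤ u*v + u*(Real.exp (v-u) - 1) := by
  rcases le_total u v with h | h
  · have hw : 0 ≤ v - u := by linarith
    have h1 := plank_aux1 (v-u) hw
    nlinarith [mul_nonneg (by linarith : (0:ℝ) ≤ u - 2) (sq_nonneg (v-u))]
  · have hs : 0 ≤ u - v := by linarith
    have h1 := plank_aux2 (u-v) hs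
    have h2 : 1 - (u-v) ≤ Real.exp (-(u-v)) := by
      have := Real.add_one_le_exp (-(u-v)); linarith
    have h3 : Real.exp (v - u) = Real.exp (-(u-v)) := by ring_nf
    rw [h3]
    nlinarith [mul_nonneg (by linarith : (0:ℝ) ≤ v - 2)
      (by linarith : (0:ℝ) ≤ (u-v) - 1 + Real.exp (-(u-v)))]

open Real in
theorem exists_weights_plank_constant (n : ℕ) (hn : 0 < n) (K : ℝ)
    (hK0 : 0 < K) (hK : K ≤ 1 / ((n * Real.exp 2) ^ ((1 : ℝ) / n)))
    (b : Fin n → ℝ) (hb : ∀ i, 0 ≤ b i)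
    (hsum : ∑ i, b i = n * K ^ n) :
    ∃ t : Fin n → ℝ, (∀ i, 0 < t i) ∧ ∑ i, t i = 1 ∧
      ∀ i, b i ≤ K ^ (1 / t i) := by
  have hn1 : (1:ℝ) ≤ n := by exact_mod_cast hn
  have hnpos : (0:ℝ) < n := by linarith
  have hnne : (n:ℝ) ≠ 0 := hnpos.ne'
  have hX : (0:ℝ) < (n:ℝ) * Real.exp 2 := by positivity
  have hpow : K^n ≤ 1 / ((n:ℝ) * Real.exp 2) := by
    have h1 : K^n ≤ (1 / (((n:ℝ)*Real.exp 2)^((1:ℝ)/n)))^n := pow_le_pow_left₀ hK0.le hK n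
    have h2 : ((((n:ℝ)*Real.exp 2))^((1:ℝ)/n))^n = (n:ℝ)*Real.exp 2 := by
      rw [← Real.rpow_natCast ((((n:ℝ)*Real.exp 2))^((1:ℝ)/n)) n, ← Real.rpow_mul hX.le,
        one_div, inv_mul_cancel₀ hnne, Real.rpow_one]
    rw [div_pow, one_pow, h2] at h1
    exact h1
  have hA_pos : 0 < K^n := pow_pos hK0 n
  have hnA : (n:ℝ) * K^n ≤ Real.exp (-2) := by
    have h1 : (n:ℝ) * K^n ≤ (n:ℝ) * (1/((n:ℝ)*Real.exp 2)) :=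
      mul_le_mul_of_nonneg_left hpow hnpos.le
    have he : (n:ℝ) * (1/((n:ℝ)*Real.exp 2)) = Real.exp (-2) := by
      rw [Real.exp_neg]
      field_simp
    linarith
  have hA_le : K^n ≤ Real.exp (-2) :=
    le_trans (le_mul_of_one_le_left hA_pos.le hn1) hnA
  have hexp1 : Real.exp (-2:ℝ) < 1 := by
    rw [Real.exp_lt_one_iff]; norm_num
  have hK1 : K < 1 := by
    by_contra h
    push_neg at h
    have : (1:ℝ) ≤ K^n := one_le_pow₀ h
    linarith
  have hlogK : Real.log K < 0 := Real.log_neg hK0 hK1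
  set A := K^n with hAdef
  have hlogA : Real.log A ≤ -2 := by
    have := Real.log_le_log hA_pos hA_le
    rwa [Real.log_exp] at this
  set v : ℝ := -Real.log A with hvdef
  have hv : 2 ≤ v := by rw [hvdef]; linarith
  have hvpos : 0 < v := by linarith
  have hvne : v ≠ 0 := hvpos.ne'
  have hAne : A ≠ 0 := hA_pos.ne'
  have hble : ∀ i, b i ≤ (n:ℝ) * A := by
    intro i
    calc b i ≤ ∑ j, b j := Finset.single_le_sum (fun j _ => hb j) (Finset.mem_univ i)
    _ = (n:ℝ) * A := hsum
  have hbexp : ∀ i, b i ≤ Real.exp (-2) := fun i => (hble i).trans hnA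
  set c : ℝ := 1/((n:ℝ) * A * v) with hcdef
  set s : Fin n → ℝ := fun i => Real.log K / Real.log (b i) with hsdef
  set g : Fin n → ℝ := fun i => 1/(n:ℝ) + (b i - A) * c with hgdef
  have hAc : A * c = 1/((n:ℝ)*v) := by
    rw [hcdef]
    field_simp
  have hgzero : ∀ i, b i = 0 → 1/(2*(n:ℝ)) ≤ g i := by
    intro i h0
    have h2 : g i = 1/(n:ℝ) - 1/((n:ℝ)*v) := by
      simp only [hgdef, h0, zero_sub, neg_mul, hAc]
      ring
    have h3 : 1/((n:ℝ)*v) ≤ 1/(2*(n:ℝ)) := by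
      apply one_div_le_one_div_of_le (by positivity)
      nlinarith
    have h4 : 1/(2*(n:ℝ)) + 1/(2*(n:ℝ)) = 1/(n:ℝ) := by
      rw [div_add_div _ _ (by positivity) (by positivity)]
      rw [div_eq_div_iff (by positivity) (by positivity)]
      ring
    rw [h2]
    linarith
  have hszero : ∀ i, b i = 0 → s i = 0 := by
    intro i h0
    simp only [hsdef, h0, Real.log_zero, div_zero]
  have h1 : ∀ i, s i ≤ g i := by
    intro i
    rcases (hb i).eq_or_lt with h0 | hpos
    · rw [hszero i h0.symm]
      have hhalf : (0:ℝ) < 1/(2*(n:ℝ)) := div_pos one_pos (by linarith)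
      exact le_trans hhalf.le (hgzero i h0.symm)
    · have hlb : Real.log (b i) ≤ -2 := by
        have := Real.log_le_log hpos (hbexp i)
        rwa [Real.log_exp] at this
      set u : ℝ := -Real.log (b i) with hudef
      have hu : 2 ≤ u := by rw [hudef]; linarith
      have hupos : 0 < u := by linarith
      have hune : u ≠ 0 := hupos.ne'
      have hE : Real.exp (v - u) = b i / A := by
        rw [hvdef, hudef, show -Real.log A - -Real.log (b i) = Real.log (b i) - Real.log A by ring,
          Real.exp_sub, Real.exp_log hpos, Real.exp_log hA_pos]
      have hcore := plank_core u v hu hv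
      rw [hE] at hcore
      have hkey : A * v^2 ≤ A*(u*v) + u*(b i - A) := by
        have h2 : A * (b i / A - 1) = b i - A := by
          field_simp
        have h3 := mul_le_mul_of_nonneg_left hcore hA_pos.le
        have h4 : A * (u*v + u*(b i / A - 1)) = A*(u*v) + u*(A*(b i/A - 1)) := by ring
        rw [h4, h2] at h3
        exact h3
      have hsi : s i = v/((n:ℝ)*u) := by
        simp only [hsdef]
        rw [show Real.log (b i) = -u by rw [hudef]; ring]
        have hlogKv : Real.log K = -(v/(n:ℝ)) := by
          rw [hvdef, hAdef, Real.log_pow]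
          field_simp
        rw [hlogKv]
        field_simp
      have hid : g i - s i = (A*(u*v) + u*(b i - A) - A*v^2) / ((n:ℝ)*A*u*v) := by
        rw [hsi]
        simp only [hgdef, hcdef]
        field_simp
      have hnn : 0 ≤ g i - s i := by
        rw [hid]
        apply div_nonneg (by linarith) (by positivity)
      linarith
  have hg_sum : ∑ i, g i = 1 := by
    simp only [hgdef]
    rw [Finset.sum_add_distrib, Finset.sum_const, Finset.card_univ, Fintype.card_fin,
      ← Finset.sum_mul, Finset.sum_sub_distrib, hsum, Finset.sum_const, Finset.card_univ,
      Fintype.card_fin, nsmul_eq_mul, nsmul_eq_mul, sub_self, zero_mul, add_zero,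
      mul_one_div, div_self hnne]
  have hS : ∑ i, s i ≤ 1 := by
    calc ∑ i, s i ≤ ∑ i, g i := Finset.sum_le_sum (fun i _ => h1 i)
    _ = 1 := hg_sum
  have hz : ∀ i₀, b i₀ = 0 → ∑ i, s i + 1/(2*(n:ℝ)) ≤ 1 := by
    intro i₀ h0
    calc ∑ i, s i + 1/(2*(n:ℝ))
        = ∑ i, (s i + if i = i₀ then 1/(2*(n:ℝ)) else 0) := by
          rw [Finset.sum_add_distrib, Finset.sum_ite_eq' Finset.univ i₀ fun _ => 1/(2*(n:ℝ))]
          simp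
      _ ≤ ∑ i, g i := by
          apply Finset.sum_le_sum
          intro i _
          by_cases h : i = i₀
          · subst h
            rw [hszero i h0]
            simpa using hgzero i h0
          · simp only [h, if_false, add_zero]
            exact h1 i
      _ = 1 := hg_sum
  set S := ∑ i, s i with hSdef
  have htpos : ∀ i, 0 < s i + (1-S)/n := by
    intro i
    rcases (hb i).eq_or_lt with h0 | hpos
    · rw [hszero i h0.symm]
      have := hz i h0.symm
      have h2 : 0 < (1-S)/n := by
        apply div_pos _ hnpos
        have : (0:ℝ) < 1/(2*(n:ℝ)) := by positivity
        linarith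
      linarith
    · have hlb : Real.log (b i) ≤ -2 := by
        have := Real.log_le_log hpos (hbexp i)
        rwa [Real.log_exp] at this
      have hs_pos : 0 < s i := by
        simp only [hsdef]
        exact div_pos_of_neg_of_neg hlogK (by linarith)
      have : 0 ≤ (1-S)/n := div_nonneg (by linarith) hnpos.le
      linarith
  refine ⟨fun i => s i + (1-S)/n, htpos, ?_, ?_⟩
  · rw [Finset.sum_add_distrib, Finset.sum_const, Finset.card_univ, Fintype.card_fin,
      nsmul_eq_mul, mul_div_cancel₀ _ hnne]
    ring
  · intro i
    rcases (hb i).eq_or_lt with h0 | hpos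
    · rw [← h0]
      exact (Real.rpow_pos_of_pos hK0 _).le
    · have hlb2 : Real.log (b i) ≤ -2 := by
        have := Real.log_le_log hpos (hbexp i)
        rwa [Real.log_exp] at this
      have hlb : Real.log (b i) < 0 := by linarith
      have ht := htpos i
      have hts : s i ≤ s i + (1-S)/n :=
        le_add_of_nonneg_right (div_nonneg (by linarith) hnpos.le)
      have h5 : (s i + (1-S)/n) * Real.log (b i) ≤ Real.log K := by
        calc (s i + (1-S)/n) * Real.log (b i) ≤ s i * Real.log (b i) :=
              mul_le_mul_of_nonpos_right hts hlb.le
          _ = Real.log K := by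
              simp only [hsdef]
              exact div_mul_cancel₀ _ hlb.ne
      rw [← Real.exp_log hpos, ← Real.exp_log (Real.rpow_pos_of_pos hK0 _), Real.exp_le_exp,
        Real.log_rpow hK0, one_div, inv_mul_eq_div, le_div_iff₀ ht]
      linarith [h5, mul_comm (Real.log (b i)) (s i + (1-S)/n)]
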